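/- arXiv:1805.11756 — 3 statements merged into one kernel-verified Lean document; each statement's English description precedes it below -/
import Mathlib

section
/- Let 0 < p < 1 and φ(z) = |Im z| + |z|^p on ℂ. Then the function z ↦ cos(z/2) belongs to H²(ℂ, e^{-φ}), i.e., ∫_ℂ |cos(z/2)|² e^{-|Im z| − |z|^p} dλ(z) < ∞. -/
open MeasureTheory Metric Filter
open scoped ENNReal Real

noncomputable section

/-- A real-valued function `φ` is *subharmonic* on a set `U ⊆ ℂ` if it is upper
semicontinuous on `U` and satisfies the sub-mean value inequality on every closed disc
contained in `U`. -/
def SubharmonicOn (φ : ℂ → ℝ) (U : Set ℂ) : Prop :=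
  UpperSemicontinuousOn φ U ∧
    ∀ z ∈ U, ∀ r : ℝ, 0 < r → Metric.closedBall z r ⊆ U →
      φ z ≤ (2 * Real.pi)⁻¹ *
        ∫ θ in (0:ℝ)..(2 * Real.pi), φ (z + r * Complex.exp (θ * Complex.I))

/-- A real-valued function `h` is *harmonic* on a set `U ⊆ ℂ` if it is continuous on `U`
and satisfies the mean value equality on every closed disc contained in `U`. -/
def HarmonicOn (h : ℂ → ℝ) (U : Set ℂ) : Prop :=
  ContinuousOn h U ∧
    ∀ z ∈ U, ∀ r : ℝ, 0 < r → Metric.closedBall z r ⊆ U →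
      h z = (2 * Real.pi)⁻¹ *
        ∫ θ in (0:ℝ)..(2 * Real.pi), h (z + r * Complex.exp (θ * Complex.I))

/-- The squared weighted `L²` norm `∫_A |f|² e^{-φ} dλ` (as an extended real). -/
def wNorm2 (φ : ℂ → ℝ) (A : Set ℂ) (f : ℂ → ℂ) : ℝ≥0∞ :=
  ∫⁻ z in A, ENNReal.ofReal (‖f z‖ ^ 2 * Real.exp (-φ z))

/-- Membership in the weighted Bergman space `H²(Ω, e^{-φ})`. -/
def MemH2 (φ : ℂ → ℝ) (Ω : Set ℂ) (f : ℂ → ℂ) : Prop :=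
  DifferentiableOn ℂ f Ω ∧ wNorm2 φ Ω f < ⊤

/-- The holomorphic polynomials lying in `H²(Ω, e^{-φ})` are dense in `H²(Ω, e^{-φ})`. -/
def PolyDense (φ : ℂ → ℝ) (Ω : Set ℂ) : Prop :=
  ∀ f : ℂ → ℂ, MemH2 φ Ω f → ∀ ε : ℝ, 0 < ε → ∃ P : Polynomial ℂ,
    wNorm2 φ Ω (fun z => P.eval z) < ⊤ ∧
    wNorm2 φ Ω (fun z => f z - P.eval z) < ENNReal.ofReal ε

/-- A Jordan curve: a subset of `ℂ` homeomorphic to the unit circle. -/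
def IsJordanCurve (Γ : Set ℂ) : Prop :=
  Nonempty (Γ ≃ₜ (Metric.sphere (0:ℂ) 1 : Set ℂ))

/-- A bounded Carathéodory domain: a bounded simply connected domain whose boundary is
also the boundary of an unbounded domain. -/
def IsBoundedCaratheodory (Ω : Set ℂ) : Prop :=
  IsOpen Ω ∧ IsConnected Ω ∧ Bornology.IsBounded Ω ∧ SimplyConnectedSpace ↥Ω ∧
    ∃ W : Set ℂ, IsOpen W ∧ IsConnected W ∧ ¬ Bornology.IsBounded W ∧ frontier Ω = frontier W

/-- An unbounded Carathéodory domain: an unbounded domain whose image under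
`z ↦ (z - z₀)⁻¹`, for some `z₀ ∉ closure Ω`, is a bounded Carathéodory domain. -/
def IsUnboundedCaratheodory (Ω : Set ℂ) : Prop :=
  IsOpen Ω ∧ IsConnected Ω ∧ ¬ Bornology.IsBounded Ω ∧
    ∃ z₀ : ℂ, z₀ ∉ closure Ω ∧ IsBoundedCaratheodory ((fun z => (z - z₀)⁻¹) '' Ω)

/-- A bounded Jordan domain: a bounded domain whose boundary is a Jordan curve. -/
def IsJordanDomain (Ω : Set ℂ) : Prop :=
  IsOpen Ω ∧ IsConnected Ω ∧ Bornology.IsBounded Ω ∧ IsJordanCurve (frontier Ω)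

/-- A moon-shaped domain with multiple boundary point `Q`: a bounded domain whose
boundary consists of two Jordan curves having exactly the point `Q` in common. -/
def IsMoonShaped (Ω : Set ℂ) (Q : ℂ) : Prop :=
  IsOpen Ω ∧ IsConnected Ω ∧ Bornology.IsBounded Ω ∧
    ∃ Γ₁ Γ₂ : Set ℂ, IsJordanCurve Γ₁ ∧ IsJordanCurve Γ₂ ∧
      frontier Ω = Γ₁ ∪ Γ₂ ∧ Γ₁ ∩ Γ₂ = {Q}

/-- A moon-shaped domain bounded by two circles: the region between an outer circle and
an internally tangent inner circle. -/
def IsTwoCircleMoon (Ω : Set ℂ) : Prop :=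
  ∃ (c₁ c₂ : ℂ) (r₁ r₂ : ℝ), 0 < r₂ ∧ r₂ < r₁ ∧ dist c₁ c₂ = r₁ - r₂ ∧
    Ω = Metric.ball c₁ r₁ \ Metric.closedBall c₂ r₂

/-- `μ` is the Riesz measure `(1/2π)Δφ` of a subharmonic function `φ`, expressed through
the Riesz decomposition: on every bounded open set `U`, `φ` is the logarithmic potential
of `μ|_U` plus a harmonic function on `U`. -/
def IsRieszMeasureOf (μ : Measure ℂ) (φ : ℂ → ℝ) : Prop :=
  ∀ U : Set ℂ, IsOpen U → Bornology.IsBounded U →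
    ∃ h : ℂ → ℝ, HarmonicOn h U ∧
      ∀ z ∈ U, φ z = (∫ ζ in U, Real.log ‖z - ζ‖ ∂μ) + h z



lemma aux_norm_cos_le (w : ℂ) : ‖Complex.cos w‖ ≤ Real.exp |w.im| := by
  have hdef : Complex.cos w
      = (Complex.exp (w * Complex.I) + Complex.exp (-w * Complex.I)) / 2 := rfl
  have h1 : ‖Complex.exp (w * Complex.I)‖ ≤ Real.exp |w.im| := by
    rw [Complex.norm_exp, Complex.mul_I_re]
    exact Real.exp_le_exp.mpr (neg_le_abs w.im)
  have h2 : ‖Complex.exp (-w * Complex.I)‖ ≤ Real.exp |w.im| := by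
    rw [Complex.norm_exp, Complex.mul_I_re]
    simp only [Complex.neg_im, neg_neg]
    exact Real.exp_le_exp.mpr (le_abs_self w.im)
  calc ‖Complex.cos w‖
      = ‖Complex.exp (w * Complex.I) + Complex.exp (-w * Complex.I)‖ / 2 := by
        rw [hdef]; simp [norm_div]
    _ ≤ (‖Complex.exp (w * Complex.I)‖ + ‖Complex.exp (-w * Complex.I)‖) / 2 := by
        gcongr; exact norm_add_le _ _
    _ ≤ Real.exp |w.im| := by linarith

lemma aux_integrand_bound (p : ℝ) (z : ℂ) :
    ‖Complex.cos (z / 2)‖ ^ 2 * Real.exp (-(|z.im| + ‖z‖ ^ p))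
      ≤ Real.exp (-(‖z‖ ^ p)) := by
  have him : |(z / 2).im| = |z.im| / 2 := by
    have : (z / 2).im = z.im / 2 := by
      simp [Complex.div_im, Complex.normSq]
    rw [this, abs_div, abs_two]
  have h1 : ‖Complex.cos (z / 2)‖ ^ 2 ≤ Real.exp |z.im| := by
    have hb := aux_norm_cos_le (z / 2)
    rw [him] at hb
    calc ‖Complex.cos (z / 2)‖ ^ 2 ≤ (Real.exp (|z.im| / 2)) ^ 2 := by
          exact pow_le_pow_left₀ (norm_nonneg _) hb 2
      _ = Real.exp |z.im| := by rw [sq, ← Real.exp_add]; ring_nf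
  have habs : ‖z‖ = ‖z‖ := rfl
  calc ‖Complex.cos (z / 2)‖ ^ 2 * Real.exp (-(|z.im| + ‖z‖ ^ p))
      ≤ Real.exp |z.im| * Real.exp (-(|z.im| + ‖z‖ ^ p)) := by
        exact mul_le_mul_of_nonneg_right h1 (Real.exp_pos _).le
    _ = Real.exp (-(‖z‖ ^ p)) := by
        rw [← Real.exp_add, habs]; ring_nf

lemma aux_growth (p : ℝ) (hp0 : 0 < p) (x : ℝ) (hx : 0 ≤ x) :
    Real.exp (-(x ^ p)) ≤ (8 * (Nat.factorial (Nat.ceil (3 / p)) : ℝ)) * (1 + x) ^ (-(3 : ℝ)) := by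
  set n : ℕ := Nat.ceil (3 / p) with hn
  have hfact : (1 : ℝ) ≤ (n.factorial : ℝ) := by
    exact_mod_cast Nat.one_le_iff_ne_zero.mpr (Nat.factorial_ne_zero n)
  have h13 : (0 : ℝ) < 1 + x := by linarith
  have hexp1 : (1 : ℝ) ≤ Real.exp (x ^ p) := Real.one_le_exp (Real.rpow_nonneg hx p)
  have key : (1 + x) ^ (3 : ℝ) ≤ (8 * (n.factorial : ℝ)) * Real.exp (x ^ p) := by
    rcases le_total x 1 with hx1 | hx1
    · calc (1 + x) ^ (3 : ℝ) ≤ (2 : ℝ) ^ (3 : ℝ) := by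
            exact Real.rpow_le_rpow h13.le (by linarith) (by norm_num)
        _ = 8 := by
            rw [show (3 : ℝ) = ((3 : ℕ) : ℝ) by norm_num, Real.rpow_natCast]; norm_num
        _ ≤ (8 * (n.factorial : ℝ)) * Real.exp (x ^ p) := by nlinarith
    · have hxpos : (0 : ℝ) < x := by linarith
      have h3n : (3 : ℝ) ≤ p * n := by
        have := Nat.le_ceil (3 / p)
        rw [← hn] at this
        calc (3 : ℝ) = p * (3 / p) := by field_simp
          _ ≤ p * n := by exact mul_le_mul_of_nonneg_left this hp0.le
      have hpow : x ^ (p * (n : ℝ)) ≤ Real.exp (x ^ p) * (n.factorial : ℝ) := by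
        have h := Real.pow_div_factorial_le_exp (x := x ^ p) (Real.rpow_nonneg hx p) n
        have h' : (x ^ p) ^ n ≤ Real.exp (x ^ p) * (n.factorial : ℝ) := by
          rw [div_le_iff₀ (by exact_mod_cast Nat.factorial_pos n : (0:ℝ) < (n.factorial : ℝ))] at h
          exact h
        calc x ^ (p * (n : ℝ)) = (x ^ p) ^ (n : ℝ) := Real.rpow_mul hx p n
          _ = (x ^ p) ^ n := Real.rpow_natCast _ n
          _ ≤ Real.exp (x ^ p) * (n.factorial : ℝ) := h'
      calc (1 + x) ^ (3 : ℝ) ≤ (2 * x) ^ (3 : ℝ) := by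
            exact Real.rpow_le_rpow h13.le (by linarith) (by norm_num)
        _ = (2 : ℝ) ^ (3 : ℝ) * x ^ (3 : ℝ) := Real.mul_rpow (by norm_num) hx
        _ = 8 * x ^ (3 : ℝ) := by
            rw [show (3 : ℝ) = ((3 : ℕ) : ℝ) by norm_num, Real.rpow_natCast]; norm_num
        _ ≤ 8 * x ^ (p * (n : ℝ)) := by
            have := Real.rpow_le_rpow_of_exponent_le hx1 h3n
            linarith
        _ ≤ 8 * (Real.exp (x ^ p) * (n.factorial : ℝ)) := by linarith
        _ = (8 * (n.factorial : ℝ)) * Real.exp (x ^ p) := by ring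
  have ha : (0 : ℝ) < Real.exp (x ^ p) := Real.exp_pos _
  have hb : (0 : ℝ) < (1 + x) ^ (3 : ℝ) := Real.rpow_pos_of_pos h13 _
  have h2 : Real.exp (-(x ^ p)) * (1 + x) ^ (3 : ℝ) ≤ 8 * (n.factorial : ℝ) := by
    rw [Real.exp_neg, inv_mul_le_iff₀ ha]
    linarith [key]
  have h3 : Real.exp (-(x ^ p))
      = Real.exp (-(x ^ p)) * (1 + x) ^ (3 : ℝ) * ((1 + x) ^ (3 : ℝ))⁻¹ := by
    field_simp
  rw [Real.rpow_neg h13.le, h3]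
  exact mul_le_mul_of_nonneg_right h2 (inv_nonneg.2 hb.le)

/-- Let `0 < p < 1` and `φ(z) = |Im z| + |z|^p` on `ℂ`.  Then
`z ↦ cos (z/2)` belongs to `H²(ℂ, e^{-φ})`, i.e.
`∫_ℂ |cos (z/2)|² e^{-|Im z| - |z|^p} dλ(z) < ∞`. -/
theorem stmt_9 (p : ℝ) (hp0 : 0 < p) (hp1 : p < 1) :
    ∫⁻ z : ℂ, ENNReal.ofReal
        (‖Complex.cos (z / 2)‖ ^ 2 * Real.exp (-(|z.im| + ‖z‖ ^ p))) < ⊤ := by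
  set C : ℝ := 8 * (Nat.factorial (Nat.ceil (3 / p)) : ℝ) with hC
  have hmaj : Integrable (fun z : ℂ => C * (1 + ‖z‖) ^ (-(3 : ℝ))) volume := by
    refine (integrable_one_add_norm ?_).const_mul C
    rw [Complex.finrank_real_complex]; norm_num
  calc ∫⁻ z : ℂ, ENNReal.ofReal
        (‖Complex.cos (z / 2)‖ ^ 2 * Real.exp (-(|z.im| + ‖z‖ ^ p)))
      ≤ ∫⁻ z : ℂ, ENNReal.ofReal (C * (1 + ‖z‖) ^ (-(3 : ℝ))) := by
        refine lintegral_mono fun z => ENNReal.ofReal_le_ofReal ?_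
        exact (aux_integrand_bound p z).trans (aux_growth p hp0 ‖z‖ (norm_nonneg z))
    _ ≤ ∫⁻ z : ℂ, (‖C * (1 + ‖z‖) ^ (-(3 : ℝ))‖₊ : ℝ≥0∞) :=
        lintegral_ofReal_le_lintegral_enorm _
    _ < ⊤ := hmaj.2

end
end

section
/- Let Ω be a bounded domain in ℂ, φ a subharmonic function on Ω such that the constant function 1 belongs to H²(Ω, e^{-φ}) (i.e., ∫_Ω e^{-φ} dλ < ∞), and let p ∈ Ω. Suppose that for each integer n ≥ 0 there exists f_n ∈ H²(Ω, e^{-φ}) with ‖f_n‖_{Ω,φ} = 1 and Taylor expansion f_n(z) = a_n (z − p)^n + O((z − p)^{n+1}) at p, where a_n > 0 is maximal among all such unit-norm functions vanishing to order n at p. Then {f_n}_{n=0}^{∞} is an orthonormal basis of the Hilbert space H²(Ω, e^{-φ}). -/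
open MeasureTheory Metric Filter
open scoped ENNReal Real

noncomputable section

section AuxStmt15

open scoped ComplexConjugate

/-- An upper semicontinuous function on an open set is a.e.-measurable for the
restricted measure. -/
lemma auxPhiMeas {Ω : Set ℂ} (hΩo : IsOpen Ω) {φ : ℂ → ℝ}
    (hφ : UpperSemicontinuousOn φ Ω) : AEMeasurable φ (volume.restrict Ω) := by
  rw [aemeasurable_restrict_iff_comap_subtype hΩo.measurableSet]
  have husc : UpperSemicontinuous (fun w : Ω => φ ↑w) := by
    intro x y hy
    have h := hφ x.1 x.2 y hy
    rw [hΩo.nhdsWithin_eq x.2] at h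
    exact (continuous_subtype_val.tendsto x).eventually h
  exact husc.measurable.aemeasurable

/-- Cross terms are integrable. -/
lemma auxCross {Ω : Set ℂ} (hΩo : IsOpen Ω) {φ : ℂ → ℝ}
    (hφm : AEMeasurable φ (volume.restrict Ω))
    {u v : ℂ → ℂ} (hu : DifferentiableOn ℂ u Ω) (hv : DifferentiableOn ℂ v Ω)
    (hui : Integrable (fun z => ‖u z‖ ^ 2 * Real.exp (-φ z)) (volume.restrict Ω))
    (hvi : Integrable (fun z => ‖v z‖ ^ 2 * Real.exp (-φ z)) (volume.restrict Ω)) :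
    Integrable (fun z => u z * conj (v z) * (Real.exp (-φ z) : ℂ)) (volume.restrict Ω) := by
  have hum : AEStronglyMeasurable u (volume.restrict Ω) :=
    (hu.continuousOn).aestronglyMeasurable hΩo.measurableSet
  have hvm : AEStronglyMeasurable v (volume.restrict Ω) :=
    (hv.continuousOn).aestronglyMeasurable hΩo.measurableSet
  have hwm : AEStronglyMeasurable (fun z => (Real.exp (-φ z) : ℂ)) (volume.restrict Ω) :=
    (Complex.measurable_ofReal.comp_aemeasurable
      (Real.measurable_exp.comp_aemeasurable hφm.neg)).aestronglyMeasurable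
  have hmeas : AEStronglyMeasurable (fun z => u z * conj (v z) * (Real.exp (-φ z) : ℂ))
      (volume.restrict Ω) :=
    (hum.mul (Complex.continuous_conj.comp_aestronglyMeasurable hvm)).mul hwm
  refine (hui.add hvi).mono' hmeas (Filter.Eventually.of_forall fun z => ?_)
  have e0 : 0 < Real.exp (-φ z) := Real.exp_pos _
  have h1 : ‖u z * conj (v z) * (Real.exp (-φ z) : ℂ)‖ = ‖u z‖ * ‖v z‖ * Real.exp (-φ z) := by
    rw [norm_mul, norm_mul, RCLike.norm_conj, Complex.norm_real,
      Real.norm_eq_abs, abs_of_pos e0]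
  rw [h1]
  simp only [Pi.add_apply]
  nlinarith [sq_nonneg (‖u z‖ - ‖v z‖), norm_nonneg (u z), norm_nonneg (v z), e0,
    mul_nonneg (norm_nonneg (u z)) (norm_nonneg (v z))]

/-- Pointwise expansion of `‖A + cB‖² e`. -/
lemma auxPointwise (c A B : ℂ) (e : ℝ) :
    ‖A + c * B‖ ^ 2 * e =
      ‖A‖ ^ 2 * e + 2 * (c * (B * conj A * (e : ℂ))).re + ‖c‖ ^ 2 * (‖B‖ ^ 2 * e) := by
  have hn : ∀ x : ℂ, ‖x‖ ^ 2 = (x * conj x).re := fun x => by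
    rw [Complex.mul_conj, Complex.ofReal_re, ← Complex.sq_norm]
  simp only [hn]
  simp only [map_add, map_mul, Complex.add_re, Complex.mul_re, Complex.mul_im, Complex.add_im,
    Complex.conj_re, Complex.conj_im, Complex.ofReal_re, Complex.ofReal_im]
  ring

/-- Integrability of the expanded combination. -/
lemma auxCombInt {Ω : Set ℂ} (hΩo : IsOpen Ω) {φ : ℂ → ℝ}
    (hφm : AEMeasurable φ (volume.restrict Ω))
    {u v : ℂ → ℂ} (hu : DifferentiableOn ℂ u Ω) (hv : DifferentiableOn ℂ v Ω)
    (hui : Integrable (fun z => ‖u z‖ ^ 2 * Real.exp (-φ z)) (volume.restrict Ω))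
    (hvi : Integrable (fun z => ‖v z‖ ^ 2 * Real.exp (-φ z)) (volume.restrict Ω)) (c : ℂ) :
    Integrable (fun z => ‖u z + c * v z‖ ^ 2 * Real.exp (-φ z)) (volume.restrict Ω) := by
  have hcross := auxCross hΩo hφm hv hu hvi hui
  have h2 : Integrable (fun z => (c * (v z * conj (u z) * (Real.exp (-φ z) : ℂ))).re)
      (volume.restrict Ω) := by
    simpa using (hcross.const_mul c).re
  have h3 : Integrable (fun z => ‖c‖ ^ 2 * (‖v z‖ ^ 2 * Real.exp (-φ z)))
      (volume.restrict Ω) := hvi.const_mul _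
  exact ((hui.add (h2.const_mul 2)).add h3).congr
    (Filter.Eventually.of_forall fun z => (auxPointwise c (u z) (v z) (Real.exp (-φ z))).symm)

/-- Expansion of the weighted square norm of `u + c v`. -/
lemma auxExpand {Ω : Set ℂ} (hΩo : IsOpen Ω) {φ : ℂ → ℝ}
    (hφm : AEMeasurable φ (volume.restrict Ω))
    {u v : ℂ → ℂ} (hu : DifferentiableOn ℂ u Ω) (hv : DifferentiableOn ℂ v Ω)
    (hui : Integrable (fun z => ‖u z‖ ^ 2 * Real.exp (-φ z)) (volume.restrict Ω))
    (hvi : Integrable (fun z => ‖v z‖ ^ 2 * Real.exp (-φ z)) (volume.restrict Ω)) (c : ℂ) :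
    (∫ z in Ω, ‖u z + c * v z‖ ^ 2 * Real.exp (-φ z)) =
      (∫ z in Ω, ‖u z‖ ^ 2 * Real.exp (-φ z))
        + 2 * (c * ∫ z in Ω, v z * conj (u z) * (Real.exp (-φ z) : ℂ)).re
        + ‖c‖ ^ 2 * ∫ z in Ω, ‖v z‖ ^ 2 * Real.exp (-φ z) := by
  have hcross := auxCross hΩo hφm hv hu hvi hui
  have hcc : Integrable (fun z => c * (v z * conj (u z) * (Real.exp (-φ z) : ℂ)))
      (volume.restrict Ω) := hcross.const_mul c
  have h2 : Integrable (fun z => (c * (v z * conj (u z) * (Real.exp (-φ z) : ℂ))).re)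
      (volume.restrict Ω) := by
    simpa using hcc.re
  have h3 : Integrable (fun z => ‖c‖ ^ 2 * (‖v z‖ ^ 2 * Real.exp (-φ z)))
      (volume.restrict Ω) := hvi.const_mul _
  have hre : (∫ z in Ω, (c * (v z * conj (u z) * (Real.exp (-φ z) : ℂ))).re)
      = (c * ∫ z in Ω, v z * conj (u z) * (Real.exp (-φ z) : ℂ)).re := by
    have := integral_re (μ := volume.restrict Ω) hcc
    simpa [integral_const_mul] using this
  calc (∫ z in Ω, ‖u z + c * v z‖ ^ 2 * Real.exp (-φ z))
      = ∫ z in Ω, (‖u z‖ ^ 2 * Real.exp (-φ z)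
          + 2 * (c * (v z * conj (u z) * (Real.exp (-φ z) : ℂ))).re
          + ‖c‖ ^ 2 * (‖v z‖ ^ 2 * Real.exp (-φ z))) :=
        integral_congr_ae (Filter.Eventually.of_forall fun z =>
          auxPointwise c (u z) (v z) (Real.exp (-φ z)))
    _ = _ := by
        have h2' : Integrable
            (fun z => 2 * (c * (v z * conj (u z) * (Real.exp (-φ z) : ℂ))).re)
            (volume.restrict Ω) := h2.const_mul 2
        have h12 : Integrable (fun z => ‖u z‖ ^ 2 * Real.exp (-φ z)
            + 2 * (c * (v z * conj (u z) * (Real.exp (-φ z) : ℂ))).re)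
            (volume.restrict Ω) := hui.add h2'
        rw [integral_add h12 h3, integral_add hui h2',
          integral_const_mul, integral_const_mul, hre]

/-- `iteratedDerivWithin` on an open set agrees with `iteratedDeriv`. -/
lemma auxDerivWithinEq {Ω : Set ℂ} (hΩo : IsOpen Ω) {p : ℂ} (hp : p ∈ Ω) (n : ℕ) (u : ℂ → ℂ) :
    iteratedDerivWithin n u Ω p = iteratedDeriv n u p := by
  rw [iteratedDerivWithin_eq_iteratedFDerivWithin, iteratedDeriv_eq_iteratedFDeriv,
    iteratedFDerivWithin_of_isOpen n hΩo hp]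

/-- Iterated derivative of `c * u`. -/
lemma auxDerivMul {Ω : Set ℂ} (hΩo : IsOpen Ω) {p : ℂ} (hp : p ∈ Ω) {u : ℂ → ℂ}
    (hu : DifferentiableOn ℂ u Ω) (c : ℂ) (n : ℕ) :
    iteratedDeriv n (fun z => c * u z) p = c * iteratedDeriv n u p := by
  rw [← auxDerivWithinEq hΩo hp n (fun z => c * u z), ← auxDerivWithinEq hΩo hp n u]
  exact iteratedDerivWithin_const_mul hp hΩo.uniqueDiffOn c ((hu.contDiffOn hΩo).contDiffWithinAt hp)

/-- Iterated derivative of `u + c v`. -/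
lemma auxDerivComb {Ω : Set ℂ} (hΩo : IsOpen Ω) {p : ℂ} (hp : p ∈ Ω) {u v : ℂ → ℂ}
    (hu : DifferentiableOn ℂ u Ω) (hv : DifferentiableOn ℂ v Ω) (c : ℂ) (n : ℕ) :
    iteratedDeriv n (fun z => u z + c * v z) p
      = iteratedDeriv n u p + c * iteratedDeriv n v p := by
  have hvc : DifferentiableOn ℂ (fun z => c * v z) Ω :=
    fun z hz => ((hv z hz).const_mul c)
  rw [← auxDerivWithinEq hΩo hp n (fun z => u z + c * v z), ← auxDerivWithinEq hΩo hp n u,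
    ← auxDerivMul hΩo hp hv c n, ← auxDerivWithinEq hΩo hp n (fun z => c * v z)]
  exact iteratedDerivWithin_add hp hΩo.uniqueDiffOn ((hu.contDiffOn hΩo).contDiffWithinAt hp) ((hvc.contDiffOn hΩo).contDiffWithinAt hp)

/-- A function analytic at `p` all of whose iterated derivatives vanish at `p` is zero near
`p`. -/
lemma auxEqZero {g : ℂ → ℂ} {p : ℂ} (hg : AnalyticAt ℂ g p)
    (h : ∀ n, iteratedDeriv n g p = 0) : ∀ᶠ z in nhds p, g z = 0 := by
  obtain ⟨q, hq⟩ := hg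
  have hq0 : ∀ n, q n = 0 := by
    intro n
    obtain ⟨r, hr⟩ := hq
    have h1 := hr.factorial_smul (y := (1 : ℂ)) n
    rw [← iteratedDeriv_eq_iteratedFDeriv, h n, nsmul_eq_mul] at h1
    have hfac : ((n.factorial : ℂ)) ≠ 0 := Nat.cast_ne_zero.mpr n.factorial_ne_zero
    have h2 : q n (fun _ => (1 : ℂ)) = 0 := by
      rcases mul_eq_zero.mp h1 with h' | h'
      · exact absurd h' hfac
      · exact h'
    have h3 : q n = ContinuousMultilinearMap.mkPiRing ℂ (Fin n) (q n fun _ => 1) :=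
      ((q n).mkPiRing_apply_one_eq_self).symm
    rw [h3, h2]
    ext m
    simp [ContinuousMultilinearMap.mkPiRing_apply]
  have hq' : q = 0 := funext hq0
  rw [hq'] at hq
  exact hq.eventually_eq_zero

end AuxStmt15

set_option maxHeartbeats 1000000 in
/-- Let `Ω` be a bounded domain, `φ` subharmonic on `Ω` with
`1 ∈ H²(Ω, e^{-φ})`, and `p ∈ Ω`.  Suppose for each `n` there is `f n ∈ H²(Ω, e^{-φ})` of
unit norm vanishing to order `n` at `p`, with `n`-th Taylor coefficient `a n > 0` maximal
among all unit-norm functions vanishing to order `n` at `p`.  Then `{f n}` is an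
orthonormal basis of `H²(Ω, e^{-φ})`: it is an orthonormal system, and any member of
`H²(Ω, e^{-φ})` orthogonal to every `f n` vanishes identically. -/
theorem stmt_15 (Ω : Set ℂ) (hΩo : IsOpen Ω) (hΩc : IsConnected Ω)
    (hΩb : Bornology.IsBounded Ω)
    (φ : ℂ → ℝ) (hφ : SubharmonicOn φ Ω)
    (h1 : ∫⁻ z in Ω, ENNReal.ofReal (Real.exp (-φ z)) < ⊤)
    (p : ℂ) (hp : p ∈ Ω)
    (f : ℕ → ℂ → ℂ) (a : ℕ → ℝ)
    (hfhol : ∀ n, DifferentiableOn ℂ (f n) Ω)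
    (hfint : ∀ n, Integrable (fun z => ‖f n z‖ ^ 2 * Real.exp (-φ z)) (volume.restrict Ω))
    (hfnorm : ∀ n, (∫ z in Ω, ‖f n z‖ ^ 2 * Real.exp (-φ z)) = 1)
    (hvanish : ∀ n, ∀ k < n, iteratedDeriv k (f n) p = 0)
    (hapos : ∀ n, 0 < a n)
    (hcoeff : ∀ n, iteratedDeriv n (f n) p = ((n.factorial : ℂ)) * ((a n : ℝ) : ℂ))
    (hmax : ∀ n, ∀ g : ℂ → ℂ, DifferentiableOn ℂ g Ω →
      Integrable (fun z => ‖g z‖ ^ 2 * Real.exp (-φ z)) (volume.restrict Ω) →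
      (∫ z in Ω, ‖g z‖ ^ 2 * Real.exp (-φ z)) = 1 →
      (∀ k < n, iteratedDeriv k g p = 0) →
      ‖iteratedDeriv n g p‖ ≤ (n.factorial : ℝ) * a n) :
    (∀ m n : ℕ,
      (∫ z in Ω, f m z * (starRingEnd ℂ) (f n z) * (Real.exp (-φ z) : ℂ)) =
        if m = n then 1 else 0) ∧
    (∀ g : ℂ → ℂ, DifferentiableOn ℂ g Ω →
      Integrable (fun z => ‖g z‖ ^ 2 * Real.exp (-φ z)) (volume.restrict Ω) →
      (∀ n : ℕ,
        (∫ z in Ω, g z * (starRingEnd ℂ) (f n z) * (Real.exp (-φ z) : ℂ)) = 0) →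
      ∀ z ∈ Ω, g z = 0) := by
  have hφm : AEMeasurable φ (volume.restrict Ω) := auxPhiMeas hΩo hφ.1
  -- the scaled maximality principle
  have hscale : ∀ n : ℕ, ∀ u : ℂ → ℂ, DifferentiableOn ℂ u Ω →
      Integrable (fun z => ‖u z‖ ^ 2 * Real.exp (-φ z)) (volume.restrict Ω) →
      (∀ k < n, iteratedDeriv k u p = 0) →
      0 < (∫ z in Ω, ‖u z‖ ^ 2 * Real.exp (-φ z)) →
      ‖iteratedDeriv n u p‖
        ≤ (n.factorial : ℝ) * a n * Real.sqrt (∫ z in Ω, ‖u z‖ ^ 2 * Real.exp (-φ z)) := by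
    intro n u hud hui hvan hN
    set N := ∫ z in Ω, ‖u z‖ ^ 2 * Real.exp (-φ z) with hNdef
    have hsq : 0 < Real.sqrt N := Real.sqrt_pos.mpr hN
    set s : ℝ := (Real.sqrt N)⁻¹ with hsdef
    have hspos : 0 < s := inv_pos.mpr hsq
    have hgd : DifferentiableOn ℂ (fun z => (s : ℂ) * u z) Ω :=
      fun z hz => (hud z hz).const_mul _
    have hptw : ∀ z : ℂ, ‖(s : ℂ) * u z‖ ^ 2 * Real.exp (-φ z)
        = s ^ 2 * (‖u z‖ ^ 2 * Real.exp (-φ z)) := by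
      intro z
      rw [norm_mul, Complex.norm_real, Real.norm_eq_abs, abs_of_pos hspos]
      ring
    have hgi : Integrable (fun z => ‖(s : ℂ) * u z‖ ^ 2 * Real.exp (-φ z))
        (volume.restrict Ω) :=
      (hui.const_mul (s ^ 2)).congr (Filter.Eventually.of_forall fun z => (hptw z).symm)
    have hs2 : s ^ 2 * N = 1 := by
      rw [hsdef, inv_pow, Real.sq_sqrt hN.le]
      exact inv_mul_cancel₀ hN.ne'
    have hnorm1 : (∫ z in Ω, ‖(s : ℂ) * u z‖ ^ 2 * Real.exp (-φ z)) = 1 := by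
      rw [integral_congr_ae (Filter.Eventually.of_forall hptw), integral_const_mul, ← hNdef, hs2]
    have hvan' : ∀ k < n, iteratedDeriv k (fun z => (s : ℂ) * u z) p = 0 := by
      intro k hk
      rw [auxDerivMul hΩo hp hud, hvan k hk, mul_zero]
    have hb := hmax n _ hgd hgi hnorm1 hvan'
    rw [auxDerivMul hΩo hp hud, norm_mul, Complex.norm_real, Real.norm_eq_abs, abs_of_pos hspos] at hb
    have hmul := mul_le_mul_of_nonneg_left hb hsq.le
    have h1 : Real.sqrt N * (s * ‖iteratedDeriv n u p‖)
        = ‖iteratedDeriv n u p‖ := by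
      rw [← mul_assoc, hsdef, mul_inv_cancel₀ hsq.ne', one_mul]
    rw [h1] at hmul
    linarith [hmul]
  -- diagonal inner products
  have hdiag : ∀ k : ℕ,
      (∫ z in Ω, f k z * (starRingEnd ℂ) (f k z) * (Real.exp (-φ z) : ℂ)) = 1 := by
    intro k
    have hptw : ∀ z : ℂ, f k z * (starRingEnd ℂ) (f k z) * (Real.exp (-φ z) : ℂ)
        = ((‖f k z‖ ^ 2 * Real.exp (-φ z) : ℝ) : ℂ) := by
      intro z
      rw [Complex.mul_conj, ← Complex.ofReal_mul, Complex.normSq_eq_norm_sq]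
    rw [integral_congr_ae (Filter.Eventually.of_forall hptw)]
    have h := Complex.ofRealCLM.integral_comp_comm (hfint k)
    simp only [Complex.ofRealCLM_apply] at h
    rw [h, hfnorm k]
    norm_num
  -- off-diagonal inner products vanish (larger index first)
  have hzero : ∀ m n : ℕ, n < m →
      (∫ z in Ω, f m z * (starRingEnd ℂ) (f n z) * (Real.exp (-φ z) : ℂ)) = 0 := by
    intro m n hnm
    set c := ∫ z in Ω, f m z * (starRingEnd ℂ) (f n z) * (Real.exp (-φ z) : ℂ) with hcdef
    by_contra hc0
    have hcpos : 0 < ‖c‖ := norm_pos_iff.mpr hc0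
    set b : ℝ := ‖c‖ ^ 2 with hbdef
    have hbpos : 0 < b := by rw [hbdef]; positivity
    set t : ℝ := min (1 / 2) (1 / (2 * (b + 1))) with htdef
    have htpos : 0 < t := lt_min (by norm_num) (by positivity)
    have htle : t ≤ 1 / 2 := min_le_left _ _
    have ht2 : t * (2 * (b + 1)) ≤ 1 := by
      have h := min_le_right (1 / 2) (1 / (2 * (b + 1)))
      rw [← htdef] at h
      calc t * (2 * (b + 1)) ≤ 1 / (2 * (b + 1)) * (2 * (b + 1)) := by
            have hpos : (0:ℝ) < 2 * (b + 1) := by positivity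
            exact mul_le_mul_of_nonneg_right h hpos.le
        _ = 1 := by field_simp
    set ε : ℂ := -(t : ℂ) * (starRingEnd ℂ) c with hεdef
    have hεc : ε * c = ((-(t * b) : ℝ) : ℂ) := by
      rw [hεdef, hbdef, Complex.sq_norm, mul_assoc, mul_comm ((starRingEnd ℂ) c) c,
        Complex.mul_conj]
      push_cast
      ring
    have hnormε : ‖ε‖ ^ 2 = t ^ 2 * b := by
      have h : ‖ε‖ = t * ‖c‖ := by
        rw [hεdef, norm_mul, norm_neg, Complex.norm_real, Real.norm_eq_abs,
          abs_of_pos htpos, Complex.norm_conj]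
      rw [h, hbdef]
      ring
    have hexp := auxExpand hΩo hφm (hfhol n) (hfhol m) (hfint n) (hfint m) ε
    rw [hfnorm n, hfnorm m, ← hcdef, hεc, hnormε, mul_one, Complex.ofReal_re] at hexp
    have hM : 0 < (∫ z in Ω, ‖f n z + ε * f m z‖ ^ 2 * Real.exp (-φ z)) := by
      rw [hexp]
      nlinarith [ht2, htpos, hbpos, mul_nonneg (sq_nonneg t) hbpos.le]
    have hcombd : DifferentiableOn ℂ (fun z => f n z + ε * f m z) Ω :=
      fun z hz => (hfhol n z hz).add ((hfhol m z hz).const_mul ε)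
    have hcombi := auxCombInt hΩo hφm (hfhol n) (hfhol m) (hfint n) (hfint m) ε
    have hvanc : ∀ k < n, iteratedDeriv k (fun z => f n z + ε * f m z) p = 0 := by
      intro k hk
      rw [auxDerivComb hΩo hp (hfhol n) (hfhol m), hvanish n k hk,
        hvanish m k (hk.trans hnm), mul_zero, add_zero]
    have hub := hscale n _ hcombd hcombi hvanc hM
    have hDn : iteratedDeriv n (fun z => f n z + ε * f m z) p
        = (n.factorial : ℂ) * ((a n : ℝ) : ℂ) := by
      rw [auxDerivComb hΩo hp (hfhol n) (hfhol m), hcoeff n, hvanish m n hnm, mul_zero,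
        add_zero]
    rw [hDn, hexp] at hub
    have habs : ‖(n.factorial : ℂ) * ((a n : ℝ) : ℂ)‖
        = (n.factorial : ℝ) * a n := by
      rw [norm_mul, Complex.norm_natCast, Complex.norm_real, Real.norm_eq_abs, abs_of_pos (hapos n)]
    rw [habs] at hub
    have hA : 0 < (n.factorial : ℝ) * a n :=
      mul_pos (by exact_mod_cast n.factorial_pos) (hapos n)
    have h1 : (1 : ℝ) ≤ Real.sqrt (1 + 2 * -(t * b) + t ^ 2 * b) := by
      have h' : (n.factorial : ℝ) * a n * 1
          ≤ (n.factorial : ℝ) * a n * Real.sqrt (1 + 2 * -(t * b) + t ^ 2 * b) := by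
        rw [mul_one]; exact hub
      exact le_of_mul_le_mul_left h' hA
    have hMnn : (0:ℝ) ≤ 1 + 2 * -(t * b) + t ^ 2 * b := by
      rw [← hexp]; exact hM.le
    have h2 : (1 : ℝ) ≤ 1 + 2 * -(t * b) + t ^ 2 * b := by
      nlinarith [h1, Real.sq_sqrt hMnn, Real.sqrt_nonneg (1 + 2 * -(t * b) + t ^ 2 * b)]
    nlinarith [h2, htle, mul_pos htpos hbpos]
  constructor
  · -- orthonormality
    intro m n
    by_cases hmn : m = n
    · subst hmn
      rw [if_pos rfl]
      exact hdiag m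
    · rw [if_neg hmn]
      rcases lt_or_gt_of_ne hmn with h | h
      · have h0 := hzero n m h
        have hconj : (∫ z in Ω, f m z * (starRingEnd ℂ) (f n z) * (Real.exp (-φ z) : ℂ))
            = ∫ z in Ω,
              (starRingEnd ℂ) (f n z * (starRingEnd ℂ) (f m z) * (Real.exp (-φ z) : ℂ)) := by
          refine integral_congr_ae (Filter.Eventually.of_forall fun z => ?_)
          simp only [map_mul, Complex.conj_conj, Complex.conj_ofReal]
          ring
        rw [hconj, integral_conj, h0, map_zero]
      · exact hzero m n h
  · -- completeness
    intro g hgd hgi horth z hz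
    have hana : AnalyticOnNhd ℂ g Ω := hgd.analyticOnNhd hΩo
    have hder : ∀ k : ℕ, iteratedDeriv k g p = 0 := by
      intro k
      induction k using Nat.strong_induction_on with
      | _ n IH =>
        by_contra hD0
        set D := iteratedDeriv n g p with hDdef
        have hDpos : 0 < ‖D‖ := norm_pos_iff.mpr hD0
        set b : ℝ := ‖D‖ ^ 2 with hbdef
        have hbpos : 0 < b := by rw [hbdef]; positivity
        set Ng := ∫ z in Ω, ‖g z‖ ^ 2 * Real.exp (-φ z) with hNgdef
        have hNg : 0 ≤ Ng := by
          rw [hNgdef]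
          exact integral_nonneg fun w => by positivity
        have hA : 0 < (n.factorial : ℝ) * a n :=
          mul_pos (by exact_mod_cast n.factorial_pos) (hapos n)
        set A : ℝ := (n.factorial : ℝ) * a n with hAdef
        set t : ℝ := min 1 (A * b / (A ^ 2 * b * Ng + 1)) with htdef
        have hdenpos : (0:ℝ) < A ^ 2 * b * Ng + 1 := by
          nlinarith [mul_nonneg (mul_nonneg (sq_nonneg A) hbpos.le) hNg]
        have htpos : 0 < t := by
          refine lt_min one_pos ?_
          exact div_pos (mul_pos hA hbpos) hdenpos
        have htC1 : t * (A ^ 2 * b * Ng + 1) ≤ A * b := by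
          have h := min_le_right 1 (A * b / (A ^ 2 * b * Ng + 1))
          rw [← htdef] at h
          exact (le_div_iff₀ hdenpos).mp h
        set ε : ℂ := (t : ℂ) * (starRingEnd ℂ) D with hεdef
        have hεD : ε * D = ((t * b : ℝ) : ℂ) := by
          rw [hεdef, hbdef, Complex.sq_norm, mul_assoc, mul_comm ((starRingEnd ℂ) D) D,
            Complex.mul_conj]
          push_cast
          ring
        have hnormε : ‖ε‖ ^ 2 = t ^ 2 * b := by
          have h : ‖ε‖ = t * ‖D‖ := by
            rw [hεdef, norm_mul, Complex.norm_real, Real.norm_eq_abs,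
              abs_of_pos htpos, Complex.norm_conj]
          rw [h, hbdef]
          ring
        have hexp := auxExpand hΩo hφm (hfhol n) hgd (hfint n) hgi ε
        rw [hfnorm n, horth n, ← hNgdef, hnormε, mul_zero, Complex.zero_re, mul_zero,
          add_zero] at hexp
        have hM : 0 < (∫ z in Ω, ‖f n z + ε * g z‖ ^ 2 * Real.exp (-φ z)) := by
          rw [hexp]
          nlinarith [hNg, mul_nonneg (mul_nonneg (sq_nonneg t) hbpos.le) hNg]
        have hcombd : DifferentiableOn ℂ (fun w => f n w + ε * g w) Ω :=
          fun w hw => (hfhol n w hw).add ((hgd w hw).const_mul ε)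
        have hcombi := auxCombInt hΩo hφm (hfhol n) hgd (hfint n) hgi ε
        have hvanc : ∀ k < n, iteratedDeriv k (fun w => f n w + ε * g w) p = 0 := by
          intro k hk
          rw [auxDerivComb hΩo hp (hfhol n) hgd, hvanish n k hk, IH k hk, mul_zero, add_zero]
        have hub := hscale n _ hcombd hcombi hvanc hM
        have hDn : iteratedDeriv n (fun w => f n w + ε * g w) p
            = ((A + t * b : ℝ) : ℂ) := by
          rw [auxDerivComb hΩo hp (hfhol n) hgd, hcoeff n, ← hDdef, hεD, hAdef]
          push_cast
          ring
        rw [hDn, hexp, ← hAdef, Complex.norm_real, Real.norm_eq_abs,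
          abs_of_pos (by nlinarith [hA, mul_pos htpos hbpos] : (0:ℝ) < A + t * b)] at hub
        have hMnn : (0:ℝ) ≤ 1 + t ^ 2 * b * Ng := by
          nlinarith [hNg, mul_nonneg (mul_nonneg (sq_nonneg t) hbpos.le) hNg]
        have h2 : (A + t * b) ^ 2 ≤ (A * Real.sqrt (1 + t ^ 2 * b * Ng)) ^ 2 := by
          have h0 : (0:ℝ) ≤ A + t * b := by nlinarith [hA, mul_pos htpos hbpos]
          exact pow_le_pow_left₀ h0 hub 2
        rw [mul_pow, Real.sq_sqrt hMnn] at h2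
        nlinarith [h2, mul_le_mul_of_nonneg_left htC1 htpos.le,
          mul_pos (mul_pos htpos hA) hbpos, sq_nonneg t, sq_nonneg (t * b), hNg, hbpos, hA,
          htpos]
    have hev : ∀ᶠ w in nhds p, g w = 0 := auxEqZero (hana p hp) hder
    exact hana.eqOn_zero_of_preconnected_of_eventuallyEq_zero hΩc.isPreconnected hp
      (by filter_upwards [hev] with w hw using hw) hz

end
end

section
/- Let K ⊂ ℂ be a compact polynomially convex set. Then there exists a subharmonic function γ on ℂ with γ = 0 on K and γ > 0 on ℂ \ K. -/
open MeasureTheory Metric Filter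
open scoped ENNReal Real

noncomputable section

lemma poly_mean (P : Polynomial ℂ) (c : ℂ) (r : ℝ) (hr : 0 < r) :
    (∫ θ in (0:ℝ)..(2 * Real.pi), P.eval (c + r * Complex.exp (θ * Complex.I)))
      = (2 * Real.pi) * P.eval c := by
  have hd : DiffContOnCl ℂ (fun z => P.eval z) (ball c r) :=
    (P.differentiable).diffContOnCl
  have h := hd.circleIntegral_sub_inv_smul (mem_ball_self hr)
  rw [circleIntegral] at h
  have hne : ∀ θ : ℝ, circleMap 0 r θ ≠ 0 := by
    intro θ
    have := circleMap_ne_center (c := 0) (R := r) hr.ne' (θ := θ)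
    simpa using this
  have h2 : (∫ θ in (0:ℝ)..(2*Real.pi),
      deriv (circleMap c r) θ • (circleMap c r θ - c)⁻¹ • P.eval (circleMap c r θ))
      = ∫ θ in (0:ℝ)..(2*Real.pi), Complex.I * P.eval (circleMap c r θ) := by
    apply intervalIntegral.integral_congr
    intro θ _
    show deriv (circleMap c r) θ • (circleMap c r θ - c)⁻¹ • P.eval (circleMap c r θ)
      = Complex.I * P.eval (circleMap c r θ)
    rw [circleMap_sub_center, deriv_circleMap]
    simp only [smul_eq_mul]
    field_simp [hne θ]
  rw [h2, intervalIntegral.integral_const_mul] at h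
  have hI : (Complex.I : ℂ) ≠ 0 := Complex.I_ne_zero
  have h3 : (∫ θ in (0:ℝ)..(2*Real.pi), P.eval (circleMap c r θ))
      = (2 * Real.pi) * P.eval c := by
    apply mul_left_cancel₀ hI
    rw [h]
    simp only [smul_eq_mul]
    ring
  simpa [circleMap] using h3

lemma u_submean (P : Polynomial ℂ) (M : ℝ) (z : ℂ) (r : ℝ) (hr : 0 < r) :
    max 0 (‖P.eval z‖ - M) ≤ (2 * Real.pi)⁻¹ *
      ∫ θ in (0:ℝ)..(2 * Real.pi),
        max 0 (‖P.eval (z + r * Complex.exp (θ * Complex.I))‖ - M) := by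
  have hpi : (0:ℝ) ≤ 2 * Real.pi := by positivity
  have hcont : Continuous fun θ : ℝ =>
      ‖P.eval (z + r * Complex.exp (θ * Complex.I))‖ :=
    continuous_norm.comp (P.continuous.comp (by continuity))
  have hcontg : Continuous fun θ : ℝ =>
      max 0 (‖P.eval (z + r * Complex.exp (θ * Complex.I))‖ - M) :=
    continuous_const.max (hcont.sub continuous_const)
  have hig : IntervalIntegrable (fun θ : ℝ =>
      max 0 (‖P.eval (z + r * Complex.exp (θ * Complex.I))‖ - M))
      MeasureTheory.volume 0 (2 * Real.pi) := hcontg.intervalIntegrable _ _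
  have hInt_nonneg : (0:ℝ) ≤ ∫ θ in (0:ℝ)..(2 * Real.pi),
      max 0 (‖P.eval (z + r * Complex.exp (θ * Complex.I))‖ - M) :=
    intervalIntegral.integral_nonneg hpi (fun x _ => le_max_left _ _)
  rcases le_or_gt (‖P.eval z‖ - M) 0 with h | h
  · rw [max_eq_left h]
    positivity
  · rw [max_eq_right h.le]
    have hmean := poly_mean P z r hr
    have habs : ‖P.eval z‖ ≤ (2 * Real.pi)⁻¹ *
        ∫ θ in (0:ℝ)..(2 * Real.pi),
          ‖P.eval (z + r * Complex.exp (θ * Complex.I))‖ := by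
      have hn : ‖∫ θ in (0:ℝ)..(2 * Real.pi),
          P.eval (z + r * Complex.exp (θ * Complex.I))‖ ≤
          ∫ θ in (0:ℝ)..(2 * Real.pi),
          ‖P.eval (z + r * Complex.exp (θ * Complex.I))‖ :=
        intervalIntegral.norm_integral_le_integral_norm hpi
      rw [hmean] at hn
      have h2pi : (0:ℝ) < 2 * Real.pi := by positivity
      have hcast : (2 * (↑Real.pi:ℂ)) = ((2 * Real.pi : ℝ) : ℂ) := by push_cast; ring
      calc ‖P.eval z‖ = (2 * Real.pi)⁻¹ * ‖2 * (↑Real.pi:ℂ) * P.eval z‖ := by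
            rw [norm_mul, hcast, Complex.norm_real, Real.norm_of_nonneg h2pi.le]
            field_simp
          _ ≤ _ := by
            apply mul_le_mul_of_nonneg_left _ (by positivity)
            exact hn
    have hsub : (2 * Real.pi)⁻¹ * (∫ θ in (0:ℝ)..(2 * Real.pi),
          ‖P.eval (z + r * Complex.exp (θ * Complex.I))‖) - M
        = (2 * Real.pi)⁻¹ * ∫ θ in (0:ℝ)..(2 * Real.pi),
          (‖P.eval (z + r * Complex.exp (θ * Complex.I))‖ - M) := by
      rw [intervalIntegral.integral_sub (hcont.intervalIntegrable _ _)
        (intervalIntegrable_const)]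
      rw [intervalIntegral.integral_const]
      have h2pi : (0:ℝ) < 2 * Real.pi := by positivity
      rw [smul_eq_mul, sub_zero, mul_sub, inv_mul_cancel_left₀ h2pi.ne']
      try ring
    have hmono : (∫ θ in (0:ℝ)..(2 * Real.pi),
          (‖P.eval (z + r * Complex.exp (θ * Complex.I))‖ - M))
        ≤ ∫ θ in (0:ℝ)..(2 * Real.pi),
          max 0 (‖P.eval (z + r * Complex.exp (θ * Complex.I))‖ - M) := by
      apply intervalIntegral.integral_mono_on hpi
        ((hcont.sub continuous_const).intervalIntegrable _ _) hig
      intro x _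
      exact le_max_right _ _
    calc ‖P.eval z‖ - M ≤ _ - M := sub_le_sub_right habs M
      _ = _ := hsub
      _ ≤ _ := by
          apply mul_le_mul_of_nonneg_left hmono (by positivity)



/-- Let `K ⊆ ℂ` be a compact polynomially convex set (for every
`q ∉ K` there is a polynomial `P` with `|P| < |P q|` on `K`).  Then there exists a
subharmonic function `γ` on `ℂ` with `γ = 0` on `K` and `γ > 0` on `ℂ \ K`. -/
theorem stmt_16 (K : Set ℂ) (hK : IsCompact K)
    (hpc : ∀ q : ℂ, q ∉ K → ∃ P : Polynomial ℂ,
      ∀ z ∈ K, ‖P.eval z‖ < ‖P.eval q‖) :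
    ∃ γ : ℂ → ℝ, SubharmonicOn γ Set.univ ∧
      (∀ z ∈ K, γ z = 0) ∧ (∀ z ∉ K, 0 < γ z) := by
  by_cases hKe : K = ∅
  · refine ⟨fun _ => 1, ⟨continuous_const.upperSemicontinuous.upperSemicontinuousOn _, ?_⟩,
      fun z hz => by simp [hKe] at hz, fun z _ => one_pos⟩
    intro z _ r hr _
    rw [intervalIntegral.integral_const]
    simp only [smul_eq_mul, sub_zero, mul_one]
    rw [inv_mul_cancel₀ (by positivity : (2 * Real.pi : ℝ) ≠ 0)]
  have hKne : K.Nonempty := Set.nonempty_iff_ne_empty.mpr hKe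
  -- choose polynomials
  have hP' : ∀ q : ℂ, ∃ P : Polynomial ℂ, q ∉ K →
      ∀ z ∈ K, ‖P.eval z‖ < ‖P.eval q‖ := by
    intro q
    by_cases hq : q ∈ K
    · exact ⟨0, fun h => absurd hq h⟩
    · obtain ⟨P, hP⟩ := hpc q hq; exact ⟨P, fun _ => hP⟩
  choose P hP using hP'
  have hAcomp : ∀ q : ℂ, IsCompact ((fun z => ‖(P q).eval z‖) '' K) :=
    fun q => hK.image (continuous_norm.comp (P q).continuous)
  set M : ℂ → ℝ := fun q => sSup ((fun z => ‖(P q).eval z‖) '' K) with hM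
  have hMle : ∀ q, ∀ z ∈ K, ‖(P q).eval z‖ ≤ M q :=
    fun q z hz => le_csSup (hAcomp q).bddAbove ⟨z, hz, rfl⟩
  have hMlt : ∀ q, q ∉ K → M q < ‖(P q).eval q‖ := by
    intro q hq
    obtain ⟨z, hz, hzeq⟩ := (hAcomp q).sSup_mem (hKne.image _)
    rw [hM]
    simp only
    rw [← hzeq]
    exact hP q hq z hz
  set u : ℂ → ℂ → ℝ := fun q z => max 0 (‖(P q).eval z‖ - M q) with hu
  have hucont : ∀ q, Continuous (u q) := fun q =>
    continuous_const.max ((continuous_norm.comp (P q).continuous).sub continuous_const)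
  have hunonneg : ∀ q z, 0 ≤ u q z := fun q z => le_max_left _ _
  have huK : ∀ q, ∀ z ∈ K, u q z = 0 :=
    fun q z hz => max_eq_left (sub_nonpos.mpr (hMle q z hz))
  have huq : ∀ q, q ∉ K → 0 < u q q :=
    fun q hq => lt_max_of_lt_right (sub_pos.mpr (hMlt q hq))
  -- countable cover
  obtain ⟨q₀, hq₀⟩ := Set.nonempty_compl.mpr hK.ne_univ
  set V : ↥(Kᶜ) → Set ℂ := fun q => {z | 0 < u q.1 z} with hV
  have hVopen : ∀ q, IsOpen (V q) := fun q => isOpen_lt continuous_const (hucont q.1)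
  obtain ⟨T, hTc, hTeq⟩ := TopologicalSpace.isOpen_iUnion_countable V hVopen
  obtain ⟨e, he⟩ := (hTc.insert (⟨q₀, hq₀⟩ : ↥(Kᶜ))).exists_eq_range
    (Set.insert_nonempty _ _)
  have hcover : ∀ z ∉ K, ∃ n : ℕ, 0 < u (e n).1 z := by
    intro z hz
    have hzV : z ∈ ⋃ i, V i := Set.mem_iUnion.mpr ⟨⟨z, hz⟩, huq z hz⟩
    rw [← hTeq] at hzV
    obtain ⟨i, hiT, hiz⟩ := Set.mem_iUnion₂.mp hzV
    have hir : i ∈ Set.range e := he ▸ Set.mem_insert_of_mem _ hiT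
    obtain ⟨n, rfl⟩ := hir
    exact ⟨n, hiz⟩
  -- the series
  set w : ℕ → ℂ → ℝ := fun n => u (e n).1 with hw
  have hwcont : ∀ n, Continuous (w n) := fun n => hucont _
  have hwnonneg : ∀ n z, 0 ≤ w n z := fun n z => hunonneg _ _
  set Mb : ℕ → ℝ := fun n => sSup (w n '' closedBall (0:ℂ) (n:ℝ)) with hMb
  have hball : ∀ m : ℕ, (closedBall (0:ℂ) (m:ℝ)).Nonempty :=
    fun m => ⟨0, mem_closedBall_self (Nat.cast_nonneg m)⟩
  have hSnonneg : ∀ (n m : ℕ), 0 ≤ sSup (w n '' closedBall (0:ℂ) (m:ℝ)) := by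
    intro n m
    obtain ⟨x, _, hxe⟩ := ((isCompact_closedBall _ _).image (hwcont n)).sSup_mem
      ((hball m).image _)
    rw [← hxe]; exact hwnonneg _ _
  have hMb0 : ∀ n, 0 ≤ Mb n := fun n => hSnonneg n n
  have hMbd : ∀ (n m : ℕ), BddAbove (w n '' closedBall (0:ℂ) (m:ℝ)) :=
    fun n m => ((isCompact_closedBall _ _).image (hwcont n)).bddAbove
  have hwle : ∀ (n m : ℕ), ∀ z ∈ closedBall (0:ℂ) (m:ℝ),
      w n z ≤ sSup (w n '' closedBall (0:ℂ) (m:ℝ)) :=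
    fun n m z hz => le_csSup (hMbd n m) ⟨z, hz, rfl⟩
  set c : ℕ → ℝ := fun n => ((2:ℝ)^n * (1 + Mb n))⁻¹ with hc
  have hcpos : ∀ n, 0 < c n := fun n => inv_pos.mpr
    (mul_pos (pow_pos two_pos n) (by linarith [hMb0 n]))
  set v : ℕ → ℂ → ℝ := fun n z => c n * w n z with hv
  have hvnonneg : ∀ n z, 0 ≤ v n z := fun n z => mul_nonneg (hcpos n).le (hwnonneg n z)
  set b : ℕ → ℕ → ℝ := fun m n => c n * sSup (w n '' closedBall (0:ℂ) (m:ℝ)) with hb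
  have hbnonneg : ∀ m n, 0 ≤ b m n := fun m n => mul_nonneg (hcpos n).le (hSnonneg n m)
  have hvb : ∀ (m n : ℕ), ∀ z ∈ closedBall (0:ℂ) (m:ℝ), v n z ≤ b m n :=
    fun m n z hz => mul_le_mul_of_nonneg_left (hwle n m z hz) (hcpos n).le
  have hble : ∀ m n : ℕ, m ≤ n → b m n ≤ (1/2:ℝ)^n := by
    intro m n hmn
    have hsub : w n '' closedBall (0:ℂ) (m:ℝ) ⊆ w n '' closedBall (0:ℂ) (n:ℝ) :=
      Set.image_mono (closedBall_subset_closedBall (by exact_mod_cast hmn))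
    have h1 : sSup (w n '' closedBall (0:ℂ) (m:ℝ)) ≤ Mb n :=
      csSup_le_csSup (hMbd n n) ((hball m).image _) hsub
    have h2 : b m n ≤ c n * (1 + Mb n) := by
      apply mul_le_mul_of_nonneg_left _ (hcpos n).le
      linarith [h1]
    have h3 : c n * (1 + Mb n) = (1/2:ℝ)^n := by
      rw [hc]
      simp only
      have : (0:ℝ) < 1 + Mb n := by linarith [hMb0 n]
      rw [one_div, inv_pow, mul_inv, mul_assoc, inv_mul_cancel₀ this.ne', mul_one]
    linarith
  have hbsum : ∀ m : ℕ, Summable (b m) := by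
    intro m
    rw [← summable_nat_add_iff m]
    apply Summable.of_nonneg_of_le (fun n => hbnonneg m (n + m))
      (fun n => hble m (n + m) (Nat.le_add_left m n))
    simp only [pow_add]
    exact summable_geometric_two.mul_right _
  set γ : ℂ → ℝ := fun z => ∑' n, v n z with hγ
  have hsum : ∀ z : ℂ, Summable (fun n => v n z) := by
    intro z
    obtain ⟨m, hm⟩ := exists_nat_ge ‖z‖
    have hz : z ∈ closedBall (0:ℂ) (m:ℝ) := by
      simpa [mem_closedBall, dist_zero_right] using hm
    exact Summable.of_nonneg_of_le (fun n => hvnonneg n z) (fun n => hvb m n z hz) (hbsum m)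
  -- continuity
  have hγcont : Continuous γ := by
    rw [continuous_iff_continuousAt]
    intro z
    obtain ⟨m, hm⟩ := exists_nat_gt ‖z‖
    have hcm : ContinuousOn γ (closedBall (0:ℂ) (m:ℝ)) := by
      have htu := tendstoUniformlyOn_tsum (hbsum m) (f := fun n z => v n z)
        (s := closedBall (0:ℂ) (m:ℝ)) (fun n x hx => by
          rw [Real.norm_of_nonneg (hvnonneg n x)]
          exact hvb m n x hx)
      exact htu.continuousOn (Filter.Eventually.of_forall fun t =>
        (continuous_finset_sum t fun n _ => (continuous_const.mul (hwcont n))).continuousOn).frequently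
    apply hcm.continuousAt
    exact Metric.closedBall_mem_nhds_of_mem (by simpa [mem_ball, dist_zero_right] using hm)
  -- values on K and off K
  have hγK : ∀ z ∈ K, γ z = 0 := by
    intro z hz
    have : ∀ n : ℕ, v n z = 0 := by
      intro n
      rw [hv]; simp only
      rw [hw]; simp only
      rw [huK _ z hz, mul_zero]
    simp only [hγ, this, tsum_zero]
  have hγpos : ∀ z ∉ K, 0 < γ z := by
    intro z hz
    obtain ⟨n, hn⟩ := hcover z hz
    have hle : v n z ≤ γ z := Summable.le_tsum (hsum z) n (fun j _ => hvnonneg j z)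
    exact lt_of_lt_of_le (mul_pos (hcpos n) hn) hle
  -- submean inequality
  have hsubmean : ∀ (z : ℂ) (r : ℝ), 0 < r →
      γ z ≤ (2 * Real.pi)⁻¹ *
        ∫ θ in (0:ℝ)..(2 * Real.pi), γ (z + r * Complex.exp (θ * Complex.I)) := by
    intro z r hr
    have hpi : (0:ℝ) ≤ 2 * Real.pi := by positivity
    have hcirccont : Continuous fun θ : ℝ => (z + r * Complex.exp (θ * Complex.I)) :=
      continuous_const.add (continuous_const.mul (Complex.continuous_exp.comp
        (Complex.continuous_ofReal.mul continuous_const)))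
    have hγint : IntervalIntegrable
        (fun θ : ℝ => γ (z + r * Complex.exp (θ * Complex.I)))
        MeasureTheory.volume 0 (2 * Real.pi) :=
      (hγcont.comp hcirccont).intervalIntegrable _ _
    have hSle : ∀ N : ℕ, (∑ n ∈ Finset.range N, v n z) ≤ (2 * Real.pi)⁻¹ *
        ∫ θ in (0:ℝ)..(2 * Real.pi), γ (z + r * Complex.exp (θ * Complex.I)) := by
      intro N
      have h1 : ∀ n : ℕ, v n z ≤ (2 * Real.pi)⁻¹ *
          ∫ θ in (0:ℝ)..(2 * Real.pi), v n (z + r * Complex.exp (θ * Complex.I)) := by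
        intro n
        have hus := u_submean (P (e n).1) (M (e n).1) z r hr
        have step : v n z ≤ c n * ((2 * Real.pi)⁻¹ *
            ∫ θ in (0:ℝ)..(2 * Real.pi), u (e n).1 (z + r * Complex.exp (θ * Complex.I))) :=
          mul_le_mul_of_nonneg_left hus (hcpos n).le
        calc v n z ≤ _ := step
          _ = (2 * Real.pi)⁻¹ *
              ∫ θ in (0:ℝ)..(2 * Real.pi), v n (z + r * Complex.exp (θ * Complex.I)) := by
            rw [show (fun θ : ℝ => v n (z + r * Complex.exp (θ * Complex.I)))
                = fun θ : ℝ => c n * u (e n).1 (z + r * Complex.exp (θ * Complex.I)) from rfl,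
              intervalIntegral.integral_const_mul]
            ring
      have hSint : ∀ n : ℕ, IntervalIntegrable
          (fun θ : ℝ => v n (z + r * Complex.exp (θ * Complex.I)))
          MeasureTheory.volume 0 (2 * Real.pi) :=
        fun n => ((continuous_const.mul (hwcont n)).comp hcirccont).intervalIntegrable _ _
      have h2 : (∑ n ∈ Finset.range N, v n z) ≤ (2 * Real.pi)⁻¹ *
          ∫ θ in (0:ℝ)..(2 * Real.pi),
            ∑ n ∈ Finset.range N, v n (z + r * Complex.exp (θ * Complex.I)) := by
        rw [intervalIntegral.integral_finset_sum (fun n _ => hSint n), Finset.mul_sum]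
        exact Finset.sum_le_sum fun n _ => h1 n
      have h3 : (∫ θ in (0:ℝ)..(2 * Real.pi),
            ∑ n ∈ Finset.range N, v n (z + r * Complex.exp (θ * Complex.I)))
          ≤ ∫ θ in (0:ℝ)..(2 * Real.pi), γ (z + r * Complex.exp (θ * Complex.I)) := by
        apply intervalIntegral.integral_mono_on hpi
          ((continuous_finset_sum _ fun n _ =>
            (continuous_const.mul (hwcont n)).comp hcirccont).intervalIntegrable _ _) hγint
        intro θ _
        exact Summable.sum_le_tsum (Finset.range N) (fun i _ => hvnonneg i _) (hsum _)
      exact le_trans h2 (mul_le_mul_of_nonneg_left h3 (by positivity))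
    have htend : Tendsto (fun N : ℕ => ∑ n ∈ Finset.range N, v n z) atTop (nhds (γ z)) :=
      (hsum z).hasSum.tendsto_sum_nat
    exact le_of_tendsto htend (Filter.Eventually.of_forall hSle)
  exact ⟨γ, ⟨hγcont.upperSemicontinuous.upperSemicontinuousOn _, fun z _ r hr _ => hsubmean z r hr⟩,
    hγK, hγpos⟩

end
end
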